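/- For 0 ≤ λ < 1 and unit vector μ₀ = (μ₁, μ₂ᵀ)ᵀ ∈ ℝ^q, the matrix A = [[1+λ²-2λμ₁, -2λμ₂ᵀ],[-2λμ₂, (1+λ²+2λμ₁)I_{q-1}]] is positive definite. -/

import Mathlib

open Matrix

/-- The block matrix A = [[1+λ²-2λμ₁, -2λμ₂ᵀ],[-2λμ₂, (1+λ²+2λμ₁)I]]. -/
def halfAngleMatrix (n : ℕ) (lam μ₁ : ℝ) (μ₂ : Fin n → ℝ) :
    Matrix (Fin (n + 1)) (Fin (n + 1)) ℝ :=
  Matrix.of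
    (Fin.cons (Fin.cons (1 + lam ^ 2 - 2 * lam * μ₁) (fun j => -2 * lam * μ₂ j))
      (fun i => Fin.cons (-2 * lam * μ₂ i)
        (fun j => if i = j then 1 + lam ^ 2 + 2 * lam * μ₁ else 0)))

set_option maxHeartbeats 1000000 in
theorem halfAngleMatrix_posDef (n : ℕ) (lam : ℝ) (h0 : 0 ≤ lam) (h1 : lam < 1)
    (μ₁ : ℝ) (μ₂ : Fin n → ℝ) (hμ : μ₁ ^ 2 + μ₂ ⬝ᵥ μ₂ = 1) :
    (halfAngleMatrix n lam μ₁ μ₂).PosDef := by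
  have hμ2 : (0:ℝ) ≤ μ₂ ⬝ᵥ μ₂ := Finset.sum_nonneg fun i _ => mul_self_nonneg _
  have hμ1 : μ₁ ^ 2 ≤ 1 := by linarith
  have hu1 : μ₁ ≤ 1 := by nlinarith [sq_nonneg (μ₁ - 1)]
  have hu2 : -1 ≤ μ₁ := by nlinarith [sq_nonneg (μ₁ + 1)]
  have ha : 0 < 1 + lam ^ 2 - 2 * lam * μ₁ := by
    nlinarith [mul_nonneg h0 (by linarith : (0:ℝ) ≤ 1 - μ₁), sq_nonneg (1 - lam)]
  have hb : 0 < 1 + lam ^ 2 + 2 * lam * μ₁ := by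
    nlinarith [mul_nonneg h0 (by linarith : (0:ℝ) ≤ μ₁ + 1), sq_nonneg (1 - lam)]
  rw [posDef_iff_dotProduct_mulVec]
  constructor
  · ext i j
    simp only [halfAngleMatrix, conjTranspose_apply, of_apply, star_trivial]
    refine Fin.cases ?_ (fun i => ?_) i <;> refine Fin.cases ?_ (fun j => ?_) j <;>
      simp [Fin.cons_succ, Fin.cons_zero, eq_comm]
  · intro x hx
    have hQ : dotProduct (star x) (halfAngleMatrix n lam μ₁ μ₂ *ᵥ x) =
        (1 + lam ^ 2 - 2 * lam * μ₁) * (x 0) ^ 2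
          - 4 * lam * (x 0) * (∑ i : Fin n, μ₂ i * x i.succ)
          + (1 + lam ^ 2 + 2 * lam * μ₁) * (∑ i : Fin n, x i.succ * x i.succ) := by
      simp only [star_trivial, dotProduct, mulVec, halfAngleMatrix, of_apply, dotProduct,
        Fin.sum_univ_succ, Fin.cons_zero, Fin.cons_succ, ite_mul, zero_mul,
        Finset.sum_ite_eq, Finset.mem_univ, if_true]
      have e1 : ∑ j : Fin n, -2 * lam * μ₂ j * x j.succ
          = -2 * lam * ∑ j : Fin n, μ₂ j * x j.succ := by
        rw [Finset.mul_sum]; exact Finset.sum_congr rfl fun j _ => by ring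
      have e2 : ∑ i : Fin n,
            x i.succ * (-2 * lam * μ₂ i * x 0 + (1 + lam ^ 2 + 2 * lam * μ₁) * x i.succ)
          = -2 * lam * x 0 * (∑ j : Fin n, μ₂ j * x j.succ)
            + (1 + lam ^ 2 + 2 * lam * μ₁) * ∑ i : Fin n, x i.succ * x i.succ := by
        rw [Finset.mul_sum, Finset.mul_sum, ← Finset.sum_add_distrib]
        exact Finset.sum_congr rfl fun i _ => by ring
      rw [e1, e2]; ring
    rw [hQ]
    set x0 : ℝ := x 0 with hx0
    set s : ℝ := ∑ i : Fin n, μ₂ i * x i.succ with hsdef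
    set t : ℝ := ∑ i : Fin n, x i.succ * x i.succ with htdef
    clear_value x0 s t
    have ht0 : 0 ≤ t := by
      rw [htdef]; exact Finset.sum_nonneg fun i _ => mul_self_nonneg _
    have hcs : s ^ 2 ≤ (1 - μ₁ ^ 2) * t := by
      have := Finset.sum_mul_sq_le_sq_mul_sq Finset.univ μ₂ (fun i => x i.succ)
      have hm : μ₂ ⬝ᵥ μ₂ = 1 - μ₁ ^ 2 := by linarith
      simp only [dotProduct] at hm
      rw [hsdef]
      calc (∑ i : Fin n, μ₂ i * x i.succ) ^ 2 ≤ (∑ i : Fin n, μ₂ i ^ 2) * ∑ i : Fin n, (x i.succ) ^ 2 := this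
        _ = (1 - μ₁ ^ 2) * t := by
            rw [htdef]
            congr 1
            · rw [← hm]; exact Finset.sum_congr rfl fun i _ => by ring
            · exact Finset.sum_congr rfl fun i _ => by ring
    have hl1 : (0:ℝ) < 1 - lam ^ 2 := by nlinarith
    have hl2 : (0:ℝ) < (1 - lam ^ 2) ^ 2 := by positivity
    by_contra hc
    push_neg at hc
    have haQ : (1 + lam ^ 2 - 2 * lam * μ₁) *
        ((1 + lam ^ 2 - 2 * lam * μ₁) * x0 ^ 2 - 4 * lam * x0 * s
          + (1 + lam ^ 2 + 2 * lam * μ₁) * t) ≤ 0 :=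
      mul_nonpos_iff.2 (Or.inl ⟨ha.le, hc⟩)
    have hC : 4 * lam ^ 2 * s ^ 2 ≤ 4 * lam ^ 2 * ((1 - μ₁ ^ 2) * t) :=
      mul_le_mul_of_nonneg_left hcs (by positivity)
    have key : (0:ℝ) ≤ ((1 + lam ^ 2 - 2 * lam * μ₁) * x0 - 2 * lam * s) ^ 2 := sq_nonneg _
    have htle : (1 - lam ^ 2) ^ 2 * t ≤ 0 := by nlinarith [haQ, hC, key]
    have htz : t = 0 := by
      by_contra h
      have hpt : 0 < t := lt_of_le_of_ne ht0 (Ne.symm h)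
      nlinarith [mul_pos hl2 hpt]
    have hsz : s = 0 := by
      have : s ^ 2 ≤ 0 := by rw [htz, mul_zero] at hcs; exact hcs
      nlinarith [sq_nonneg s]
    have hxz : ∀ i : Fin n, x i.succ = 0 := by
      intro i
      have hle : x i.succ * x i.succ ≤ t := by
        rw [htdef]
        exact Finset.single_le_sum (f := fun j : Fin n => x j.succ * x j.succ)
          (fun j _ => mul_self_nonneg _) (Finset.mem_univ i)
      exact mul_self_eq_zero.mp
        (le_antisymm (by linarith) (mul_self_nonneg _))
    have hx00 : x0 = 0 := by
      rw [hsz, htz] at hc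
      by_contra h
      have hx2 : 0 < x0 ^ 2 := by positivity
      nlinarith [mul_pos ha hx2]
    apply hx
    funext i
    simp only [Pi.zero_apply]
    refine Fin.cases ?_ (fun i => ?_) i
    · rw [← hx0]; exact hx00
    · exact hxz i
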